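/- Let μ be a tempered positive Borel measure on ℝⁿ. Let f : ℝⁿ → ℂ be a measurable rapidly decreasing function, i.e., for every N ∈ ℕ there is a constant C_N with |f(η)| ≤ C_N (1+‖η‖)^{−N} for all η ∈ ℝⁿ. Let ξ ∈ ℝⁿ, B > 0 and t₀ ≥ 1 be such that ‖ω + tξ‖ ≥ B t for every ω in the support of μ and every t ≥ t₀. Then the integral I(t) = ∫ f(ω + tξ) dμ(ω) is absolutely convergent for every t ≥ t₀ and is rapidly decreasing: for every N ∈ ℕ, sup_{t ≥ t₀} t^N |I(t)| < ∞. (Rapid-decay step in the proof of Theorem IV.3, part 1.) -/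

import Mathlib

open MeasureTheory

/-- A positive Borel measure `μ` on `ℝⁿ` is *tempered* if `∫ (1+‖ω‖)^{−N₀} dμ(ω) < ∞`
for some natural number `N₀`. -/
def IsTemperedMeasure {n : ℕ} (μ : Measure (EuclideanSpace ℝ (Fin n))) : Prop :=
  ∃ N₀ : ℕ, ∫⁻ ω, ENNReal.ofReal ((1 + ‖ω‖) ^ (-(N₀ : ℝ))) ∂μ < ⊤

/-- The (topological) support of a measure: the set of points all of whose neighbourhoods
have positive measure. -/
def measureSupport {n : ℕ} (μ : Measure (EuclideanSpace ℝ (Fin n))) :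
    Set (EuclideanSpace ℝ (Fin n)) :=
  {x | ∀ U ∈ nhds x, μ U ≠ 0}

/-- Auxiliary purely real inequality. -/
lemma rapid_decay_aux (N N₀ : ℕ) {B t a b c F C : ℝ} (hB : 0 < B) (ht : 1 ≤ t)
    (ha : 1 ≤ a) (hb : 1 ≤ b) (hc : 0 ≤ c) (hF : 0 ≤ F)
    (haBt : B * t ≤ a) (hab : b ≤ a * (t * (1 + c)))
    (hFb : F * a ^ (N + 2 * N₀) ≤ C) :
    t ^ N * F ≤ (C * (1 + c) ^ N₀ / B ^ (N + N₀)) * (b ^ N₀)⁻¹ := by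
  have ht0 : (0:ℝ) < t := lt_of_lt_of_le one_pos ht
  have ha0 : (0:ℝ) < a := lt_of_lt_of_le one_pos ha
  have hb0 : (0:ℝ) < b := lt_of_lt_of_le one_pos hb
  have hmain : B ^ (N + N₀) * t ^ N * b ^ N₀ ≤ (1 + c) ^ N₀ * a ^ (N + 2 * N₀) := by
    have h1 : b ^ N₀ ≤ a ^ N₀ * (t ^ N₀ * (1 + c) ^ N₀) := by
      calc b ^ N₀ ≤ (a * (t * (1 + c))) ^ N₀ := pow_le_pow_left₀ hb0.le hab N₀
        _ = a ^ N₀ * (t ^ N₀ * (1 + c) ^ N₀) := by rw [mul_pow, mul_pow]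
    have h2 : B ^ (N + N₀) * t ^ (N + N₀) ≤ a ^ (N + N₀) := by
      rw [← mul_pow]; exact pow_le_pow_left₀ (by positivity) haBt _
    have hsplit : a ^ (N + 2 * N₀) = a ^ (N + N₀) * a ^ N₀ := by
      rw [← pow_add]; congr 1; omega
    have htsplit : t ^ (N + N₀) = t ^ N * t ^ N₀ := pow_add t N N₀
    calc B ^ (N + N₀) * t ^ N * b ^ N₀
        ≤ B ^ (N + N₀) * t ^ N * (a ^ N₀ * (t ^ N₀ * (1 + c) ^ N₀)) :=
          mul_le_mul_of_nonneg_left h1 (by positivity)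
      _ = (1 + c) ^ N₀ * ((B ^ (N + N₀) * (t ^ N * t ^ N₀)) * a ^ N₀) := by ring
      _ = (1 + c) ^ N₀ * ((B ^ (N + N₀) * t ^ (N + N₀)) * a ^ N₀) := by rw [htsplit]
      _ ≤ (1 + c) ^ N₀ * (a ^ (N + N₀) * a ^ N₀) :=
          mul_le_mul_of_nonneg_left
            (mul_le_mul_of_nonneg_right h2 (by positivity)) (by positivity)
      _ = (1 + c) ^ N₀ * a ^ (N + 2 * N₀) := by rw [hsplit]
  have key2 : t ^ N * F * (B ^ (N + N₀) * b ^ N₀) ≤ C * (1 + c) ^ N₀ := by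
    calc t ^ N * F * (B ^ (N + N₀) * b ^ N₀)
        = F * (B ^ (N + N₀) * t ^ N * b ^ N₀) := by ring
      _ ≤ F * ((1 + c) ^ N₀ * a ^ (N + 2 * N₀)) := mul_le_mul_of_nonneg_left hmain hF
      _ = (F * a ^ (N + 2 * N₀)) * (1 + c) ^ N₀ := by ring
      _ ≤ C * (1 + c) ^ N₀ := mul_le_mul_of_nonneg_right hFb (by positivity)
  have heq : (C * (1 + c) ^ N₀ / B ^ (N + N₀)) * (b ^ N₀)⁻¹
      = (C * (1 + c) ^ N₀) / (B ^ (N + N₀) * b ^ N₀) := by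
    field_simp
  rw [heq, le_div_iff₀ (by positivity)]
  exact key2


/-- If `μ` is a tempered measure on `ℝⁿ`, `f` is measurable and rapidly decreasing, and
`‖ω + tξ‖ ≥ B t` on the support of `μ` for `t ≥ t₀`, then `I(t) = ∫ f(ω + tξ) dμ(ω)` is
absolutely convergent for `t ≥ t₀` and rapidly decreasing as `t → +∞`. -/
theorem integral_rapid_decay_of_tempered {n : ℕ}
    (μ : Measure (EuclideanSpace ℝ (Fin n))) (htemp : IsTemperedMeasure μ)
    (f : EuclideanSpace ℝ (Fin n) → ℂ) (hfmeas : Measurable f)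
    (hdecay : ∀ N : ℕ, ∃ C : ℝ, ∀ η, ‖f η‖ ≤ C * (1 + ‖η‖) ^ (-(N : ℝ)))
    (ξ : EuclideanSpace ℝ (Fin n)) (B : ℝ) (hB : 0 < B) (t₀ : ℝ) (ht₀ : 1 ≤ t₀)
    (hsupp : ∀ ω ∈ measureSupport μ, ∀ t : ℝ, t₀ ≤ t → B * t ≤ ‖ω + t • ξ‖) :
    (∀ t : ℝ, t₀ ≤ t → Integrable (fun ω => f (ω + t • ξ)) μ) ∧
      ∀ N : ℕ, ∃ C : ℝ, ∀ t : ℝ, t₀ ≤ t → t ^ N * ‖∫ ω, f (ω + t • ξ) ∂μ‖ ≤ C := by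
  obtain ⟨N₀, hN₀⟩ := htemp
  have hnull : μ (measureSupport μ)ᶜ = 0 := by
    apply measure_null_of_locally_null
    intro x hx
    simp only [measureSupport, Set.mem_compl_iff, Set.mem_setOf_eq, not_forall] at hx
    obtain ⟨U, hU, hU0⟩ := hx
    push_neg at hU0
    exact ⟨U, nhdsWithin_le_nhds hU, hU0⟩
  have hae_supp : ∀ᵐ ω ∂μ, ω ∈ measureSupport μ := by
    rw [ae_iff]
    exact hnull
  set g : EuclideanSpace ℝ (Fin n) → ℝ := fun ω => (1 + ‖ω‖) ^ (-(N₀ : ℝ)) with hg_def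
  have hg_pos : ∀ ω, 0 < g ω := fun ω => Real.rpow_pos_of_pos (by positivity) _
  have hg_meas : Measurable g :=
    ((continuous_const.add continuous_norm).rpow_const
      (fun x => Or.inl (ne_of_gt (by positivity : (0:ℝ) < 1 + ‖x‖)))).measurable
  have hg_int : Integrable g μ := by
    refine ⟨hg_meas.aestronglyMeasurable, ?_⟩
    unfold HasFiniteIntegral
    have h : ∀ ω, ‖g ω‖ₑ = ENNReal.ofReal (g ω) := fun ω =>
      Real.enorm_eq_ofReal (hg_pos ω).le
    simpa only [h] using hN₀
  -- key pointwise bound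
  have key : ∀ N : ℕ, ∃ C : ℝ, 0 ≤ C ∧ ∀ t : ℝ, t₀ ≤ t →
      ∀ ω ∈ measureSupport μ, t ^ N * ‖f (ω + t • ξ)‖ ≤ C * g ω := by
    intro N
    obtain ⟨C, hC⟩ := hdecay (N + 2 * N₀)
    have hC0 : 0 ≤ C := by
      have h1 : (0:ℝ) < (1 + ‖(0 : EuclideanSpace ℝ (Fin n))‖) ^ (-((N + 2*N₀ : ℕ) : ℝ)) :=
        Real.rpow_pos_of_pos (by positivity) _
      nlinarith [norm_nonneg (f 0), hC 0]
    refine ⟨C * (1 + ‖ξ‖) ^ N₀ / B ^ (N + N₀), by positivity, ?_⟩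
    intro t ht ω hω
    have ht1 : (1:ℝ) ≤ t := le_trans ht₀ ht
    have ht0 : (0:ℝ) < t := lt_of_lt_of_le one_pos ht1
    have hBt : B * t ≤ ‖ω + t • ξ‖ := hsupp ω hω t ht
    have ha0 : (0:ℝ) < 1 + ‖ω + t • ξ‖ := by positivity
    have hb0 : (0:ℝ) < 1 + ‖ω‖ := by positivity
    have htri : ‖ω‖ ≤ ‖ω + t • ξ‖ + t * ‖ξ‖ := by
      calc ‖ω‖ = ‖(ω + t • ξ) - t • ξ‖ := by rw [add_sub_cancel_right]
        _ ≤ ‖ω + t • ξ‖ + ‖t • ξ‖ := norm_sub_le _ _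
        _ = ‖ω + t • ξ‖ + t * ‖ξ‖ := by rw [norm_smul, Real.norm_eq_abs, abs_of_pos ht0]
    have hab : 1 + ‖ω‖ ≤ (1 + ‖ω + t • ξ‖) * (t * (1 + ‖ξ‖)) := by
      nlinarith [htri, norm_nonneg ξ, norm_nonneg (ω + t • ξ), norm_nonneg ω,
        mul_nonneg (mul_nonneg ht0.le (norm_nonneg (ω + t • ξ))) (norm_nonneg ξ),
        mul_le_mul_of_nonneg_right ht1 (norm_nonneg (ω + t • ξ))]
    have hfb : ‖f (ω + t • ξ)‖ * (1 + ‖ω + t • ξ‖) ^ (N + 2 * N₀) ≤ C := by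
      have h := hC (ω + t • ξ)
      rw [Real.rpow_neg ha0.le, Real.rpow_natCast] at h
      have hpow : (0:ℝ) < (1 + ‖ω + t • ξ‖) ^ (N + 2 * N₀) := by positivity
      calc ‖f (ω + t • ξ)‖ * (1 + ‖ω + t • ξ‖) ^ (N + 2*N₀)
          ≤ (C * ((1 + ‖ω + t • ξ‖) ^ (N + 2*N₀))⁻¹) * (1 + ‖ω + t • ξ‖) ^ (N + 2*N₀) :=
            mul_le_mul_of_nonneg_right h hpow.le
        _ = C := by field_simp
    have hgω : g ω = ((1 + ‖ω‖) ^ N₀)⁻¹ := by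
      rw [hg_def]
      simp only []
      rw [Real.rpow_neg hb0.le, Real.rpow_natCast]
    rw [hgω]
    exact rapid_decay_aux N N₀ hB ht1 (by simp [norm_nonneg]) (by simp [norm_nonneg])
      (norm_nonneg ξ) (norm_nonneg _) (by linarith) hab hfb
  -- integrability
  have hint : ∀ t : ℝ, t₀ ≤ t → Integrable (fun ω => f (ω + t • ξ)) μ := by
    intro t ht
    obtain ⟨C, hC0, hkey⟩ := key 0
    have hmeas_t : AEStronglyMeasurable (fun ω => f (ω + t • ξ)) μ :=
      (hfmeas.comp (measurable_add_const (t • ξ))).aestronglyMeasurable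
    refine (hg_int.const_mul C).mono' hmeas_t ?_
    filter_upwards [hae_supp] with ω hω
    have := hkey t ht ω hω
    simpa using this
  refine ⟨hint, ?_⟩
  -- rapid decay of the integral
  intro N
  obtain ⟨C, hC0, hkey⟩ := key N
  refine ⟨C * ∫ ω, g ω ∂μ, ?_⟩
  intro t ht
  have hInt := hint t ht
  have ht0 : (0:ℝ) < t := lt_of_lt_of_le (lt_of_lt_of_le one_pos ht₀) ht
  have h1 : ‖∫ ω, f (ω + t • ξ) ∂μ‖ ≤ ∫ ω, ‖f (ω + t • ξ)‖ ∂μ :=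
    norm_integral_le_integral_norm _
  have h2 : ∫ ω, t ^ N * ‖f (ω + t • ξ)‖ ∂μ ≤ ∫ ω, C * g ω ∂μ := by
    refine integral_mono_ae (hInt.norm.const_mul _) (hg_int.const_mul C) ?_
    filter_upwards [hae_supp] with ω hω
    exact hkey t ht ω hω
  calc t ^ N * ‖∫ ω, f (ω + t • ξ) ∂μ‖
      ≤ t ^ N * ∫ ω, ‖f (ω + t • ξ)‖ ∂μ := mul_le_mul_of_nonneg_left h1 (by positivity)
    _ = ∫ ω, t ^ N * ‖f (ω + t • ξ)‖ ∂μ := (integral_const_mul _ _).symm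
    _ ≤ ∫ ω, C * g ω ∂μ := h2
    _ = C * ∫ ω, g ω ∂μ := integral_const_mul _ _
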